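/- Let m ≥ 1 and b : Fin m → ZMod 2, and for r₁, r₂ : Fin m → ZMod 2 define E(r₁, r₂) = ⟨r₁,b⟩ + ⟨r₂,b⟩ + ⟨r₁,b⟩·⟨r₂,b⟩ in ZMod 2, where ⟨r,b⟩ = ∑ i, r i * b i. If b = 0 then E(r₁, r₂) = 0 for all r₁, r₂. If b ≠ 0, then the number of pairs (r₁, r₂) ∈ (Fin m → ZMod 2) × (Fin m → ZMod 2) with E(r₁, r₂) = 1 is exactly 3 · 4^(m−1). -/

import Mathlib

open Finset

private lemma zmod2_cases : ∀ x : ZMod 2, x ≠ 0 → x = 1 := by decide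

private lemma half_count (m : ℕ) (b : Fin m → ZMod 2) (hb : b ≠ 0) :
    (univ.filter (fun r : Fin m → ZMod 2 => ∑ i, r i * b i = 0)).card
      = (univ.filter (fun r : Fin m → ZMod 2 => ∑ i, r i * b i = 1)).card := by
  obtain ⟨i₀, hi₀⟩ : ∃ i, b i ≠ 0 := by
    by_contra h; push_neg at h; exact hb (funext h)
  have hb1 : b i₀ = 1 := zmod2_cases _ hi₀
  set σ : (Fin m → ZMod 2) → (Fin m → ZMod 2) := fun r => r + (Pi.single i₀ 1 : Fin m → ZMod 2) with hσ
  have hflip : ∀ r : Fin m → ZMod 2, (∑ i, σ r i * b i) = (∑ i, r i * b i) + 1 := by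
    intro r
    have : (∑ i, σ r i * b i) = (∑ i, r i * b i) + ∑ i, (Pi.single i₀ 1 : Fin m → ZMod 2) i * b i := by
      rw [← Finset.sum_add_distrib]
      refine Finset.sum_congr rfl fun i _ => ?_
      simp [hσ, add_mul]
    rw [this]
    congr 1
    rw [Finset.sum_eq_single i₀]
    · simp [hb1]
    · intro j _ hj; simp [Pi.single_eq_of_ne hj]
    · simp
  have hinv : ∀ r, σ (σ r) = r := by
    intro r
    funext i
    simp [hσ]
    ring_nf
    rw [Pi.single_apply]
    split <;> simp <;> ring_nf <;> rfl
  apply Finset.card_nbij' σ σ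
  · intro r hr
    simp only [Finset.mem_coe, mem_filter, mem_univ, true_and] at hr ⊢
    rw [hflip, hr]; decide
  · intro r hr
    simp only [Finset.mem_coe, mem_filter, mem_univ, true_and] at hr ⊢
    rw [hflip, hr]; decide
  · intro r _; exact hinv r
  · intro r _; exact hinv r


private lemma ones_count (m : ℕ) (hm : 1 ≤ m) (b : Fin m → ZMod 2) (hb : b ≠ 0) :
    (univ.filter (fun r : Fin m → ZMod 2 => ∑ i, r i * b i = 1)).card = 2 ^ (m - 1) := by
  have hne : ∀ r : Fin m → ZMod 2, (¬ (∑ i, r i * b i = 0)) ↔ (∑ i, r i * b i = 1) := by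
    intro r
    constructor
    · exact zmod2_cases _
    · intro h h0; rw [h0] at h; exact absurd h (by decide)
  have heq : univ.filter (fun r : Fin m → ZMod 2 => ¬ (∑ i, r i * b i = 0))
      = univ.filter (fun r : Fin m → ZMod 2 => ∑ i, r i * b i = 1) := by
    ext r
    simp only [mem_filter, mem_univ, true_and]
    exact hne r
  have htot : (univ.filter (fun r : Fin m → ZMod 2 => ∑ i, r i * b i = 0)).card
      + (univ.filter (fun r : Fin m → ZMod 2 => ∑ i, r i * b i = 1)).card = 2 ^ m := by
    have h := Finset.card_filter_add_card_filter_not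
      (s := (univ : Finset (Fin m → ZMod 2)))
      (p := fun r => ∑ i, r i * b i = 0)
    rw [heq] at h
    rw [h]
    simp [Finset.card_univ]
  have hhalf := half_count m b hb
  have h2m : ∀ n : ℕ, 1 ≤ n → 2 ^ n = 2 * 2 ^ (n - 1) := by
    intro n hn
    cases n with
    | zero => exact absurd hn (Nat.not_succ_le_zero 0)
    | succ k => rw [Nat.add_sub_cancel, pow_succ, Nat.mul_comm]
  rw [hhalf, h2m m hm, ← Nat.two_mul] at htot
  exact Nat.eq_of_mul_eq_mul_left (by norm_num) htot

theorem razborov_smolensky_or (m : ℕ) (hm : 1 ≤ m) (b : Fin m → ZMod 2) :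
    let ip : (Fin m → ZMod 2) → ZMod 2 := fun r => ∑ i, r i * b i
    let E : (Fin m → ZMod 2) → (Fin m → ZMod 2) → ZMod 2 :=
      fun r₁ r₂ => ip r₁ + ip r₂ + ip r₁ * ip r₂
    (b = 0 → ∀ r₁ r₂, E r₁ r₂ = 0) ∧
    (b ≠ 0 →
      (Finset.univ.filter
        (fun p : (Fin m → ZMod 2) × (Fin m → ZMod 2) => E p.1 p.2 = 1)).card
        = 3 * 4 ^ (m - 1)) := by
  intro ip E
  constructor
  · intro hb r₁ r₂
    have h : ∀ r, ip r = 0 := by intro r; simp [ip, hb]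
    simp [E, h]
  · intro hb
    have key : ∀ p : (Fin m → ZMod 2) × (Fin m → ZMod 2),
        (¬ E p.1 p.2 = 1) ↔ (ip p.1 = 0 ∧ ip p.2 = 0) := by
      intro p
      have h1 : ip p.1 = 0 ∨ ip p.1 = 1 := by
        rcases eq_or_ne (ip p.1) 0 with h | h
        · exact Or.inl h
        · exact Or.inr (zmod2_cases _ h)
      have h2 : ip p.2 = 0 ∨ ip p.2 = 1 := by
        rcases eq_or_ne (ip p.2) 0 with h | h
        · exact Or.inl h
        · exact Or.inr (zmod2_cases _ h)
      rcases h1 with h1 | h1 <;> rcases h2 with h2 | h2 <;>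
        simp [E, h1, h2] <;> decide
    have heq : univ.filter (fun p : (Fin m → ZMod 2) × (Fin m → ZMod 2) => ¬ E p.1 p.2 = 1)
        = univ.filter (fun p : (Fin m → ZMod 2) × (Fin m → ZMod 2) => ip p.1 = 0 ∧ ip p.2 = 0) := by
      ext p
      simp only [mem_filter, mem_univ, true_and]
      exact key p
    have htot : (univ.filter (fun p : (Fin m → ZMod 2) × (Fin m → ZMod 2) => E p.1 p.2 = 1)).card
        + (univ.filter (fun p : (Fin m → ZMod 2) × (Fin m → ZMod 2) =>
            ip p.1 = 0 ∧ ip p.2 = 0)).card = 4 ^ m := by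
      have h := Finset.card_filter_add_card_filter_not
        (s := (univ : Finset ((Fin m → ZMod 2) × (Fin m → ZMod 2))))
        (p := fun p : (Fin m → ZMod 2) × (Fin m → ZMod 2) => E p.1 p.2 = 1)
      rw [heq] at h
      rw [h]
      simp only [Finset.card_univ, Fintype.card_prod, Fintype.card_fun,
        ZMod.card, Fintype.card_fin]
      rw [show (4:ℕ) = 2 * 2 from rfl, mul_pow]
    have hz : (univ.filter (fun p : (Fin m → ZMod 2) × (Fin m → ZMod 2) =>
        ip p.1 = 0 ∧ ip p.2 = 0)).card = 4 ^ (m - 1) := by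
      have : (univ.filter (fun p : (Fin m → ZMod 2) × (Fin m → ZMod 2) =>
          ip p.1 = 0 ∧ ip p.2 = 0))
          = (univ.filter (fun r : Fin m → ZMod 2 => ip r = 0)) ×ˢ
            (univ.filter (fun r : Fin m → ZMod 2 => ip r = 0)) := by
        ext p
        simp [Finset.mem_product, and_assoc]
      rw [this, Finset.card_product]
      have hc0 : (univ.filter (fun r : Fin m → ZMod 2 => ip r = 0)).card = 2 ^ (m - 1) := by
        have := half_count m b hb
        rw [ones_count m hm b hb] at this
        exact this
      rw [hc0]
      rw [show (4:ℕ) = 2 * 2 from rfl, mul_pow]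
    rw [hz] at htot
    have h4m : ∀ n : ℕ, 1 ≤ n → 4 ^ n = 3 * 4 ^ (n - 1) + 4 ^ (n - 1) := by
      intro n hn
      cases n with
      | zero => exact absurd hn (Nat.not_succ_le_zero 0)
      | succ k =>
        rw [Nat.add_sub_cancel, pow_succ, Nat.mul_comm]
        ring
    rw [h4m m hm] at htot
    exact Nat.add_right_cancel htot
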